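/- Let V be a real symmetric positive-definite matrix on a finite graph with dimension bound |S_r(i)| ≤ c·r^{d-1}, and suppose the entries of V^{-1/2} satisfy |(V^{-1/2})_{i,j}| ≤ K₀ for i=j and |(V^{-1/2})_{i,j}| ≤ K·dist(i,j)^{-η} for i≠j, with η>d. Then the smallest eigenvalue of V satisfies λ_min(V^{1/2}) ≥ 1/(K₀ + c·K·ζ(1+η-d)), equivalently the spectral gap ΔE = 2λ_min(V^{1/2}) ≥ 2/(K₀ + c·K·ζ(1+η-d)) > 0. -/
import Mathlib

open Matrix

open Finset in
lemma zeta_re_aux {s : ℝ} (hs : 1 < s) (N : ℕ) :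
    ∑ r ∈ Finset.Icc 1 N, ((r : ℝ)) ^ (-s) ≤ (riemannZeta s).re := by
  have hsum : Summable (fun n : ℕ => 1 / (n : ℝ) ^ s) :=
    Real.summable_one_div_nat_rpow.mpr hs
  have hzeta : (riemannZeta s).re = ∑' n : ℕ, 1 / (n : ℝ) ^ s := by
    have h1 : riemannZeta s = ∑' n : ℕ, 1 / (n : ℂ) ^ (s : ℂ) :=
      zeta_eq_tsum_one_div_nat_cpow (by simpa using hs)
    have h2 : ∀ n : ℕ, (1 / (n : ℂ) ^ (s : ℂ)) = ((1 / (n : ℝ) ^ s : ℝ) : ℂ) := by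
      intro n
      rw [show ((n : ℂ)) = ((n : ℝ) : ℂ) by push_cast; rfl,
        ← Complex.ofReal_cpow (Nat.cast_nonneg n)]
      push_cast
      ring
    rw [h1]
    simp_rw [h2]
    rw [← Complex.ofReal_tsum]
    simp
  rw [hzeta]
  have : ∀ r ∈ Finset.Icc 1 N, ((r : ℝ)) ^ (-s) = 1 / (r : ℝ) ^ s := by
    intro r hr
    rw [Real.rpow_neg (Nat.cast_nonneg r), one_div]
  rw [Finset.sum_congr rfl this]
  exact Summable.sum_le_tsum _ (fun n _ => by positivity) hsum

theorem gap_from_algebraic_decay {L : Type*} [Fintype L] [DecidableEq L] [Nonempty L]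
    (G : SimpleGraph L) (hG : G.Connected)
    (V R W : Matrix L L ℝ) (hV : V.PosDef)
    (hR : R.PosDef) (hRsym : R.IsHermitian) (hRsq : R * R = V)
    (hWinv : W * R = 1)
    (c d : ℝ) (hc : 0 < c) (hd : 0 < d)
    (hsphere : ∀ i : L, ∀ r : ℕ, 1 ≤ r →
      ((Finset.univ.filter fun l : L => G.dist i l = r).card : ℝ) ≤ c * (r : ℝ) ^ (d - 1))
    (K₀ K η : ℝ) (hK₀ : 0 ≤ K₀) (hK : 0 ≤ K) (hη : d < η)
    (hdiag : ∀ i : L, |W i i| ≤ K₀)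
    (hoff : ∀ i j : L, i ≠ j → |W i j| ≤ K * (G.dist i j : ℝ) ^ (-η)) :
    1 / (K₀ + c * K * (riemannZeta (1 + η - d)).re) ≤ ⨅ i, hRsym.eigenvalues i ∧
    0 < 2 / (K₀ + c * K * (riemannZeta (1 + η - d)).re) ∧
    2 / (K₀ + c * K * (riemannZeta (1 + η - d)).re) ≤ 2 * ⨅ i, hRsym.eigenvalues i := by
  set s : ℝ := 1 + η - d with hs_def
  have hs : 1 < s := by simp [hs_def]; linarith
  have hzcast : riemannZeta (1 + η - d : ℂ) = riemannZeta (s : ℂ) := by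
    congr 1; push_cast [hs_def]; ring
  set Z : ℝ := (riemannZeta (s : ℝ)).re with hZ_def
  set B : ℝ := K₀ + c * K * Z with hB_def
  -- row sum bound
  have hrow : ∀ i : L, ∑ j, |W i j| ≤ B := by
    intro i
    rw [← Finset.add_sum_erase _ _ (Finset.mem_univ i)]
    refine add_le_add (hdiag i) ?_
    set N : ℕ := Finset.univ.sup (fun j => G.dist i j) with hN
    have hmaps : ∀ j ∈ Finset.univ.erase i, G.dist i j ∈ Finset.Icc 1 N := by
      intro j hj
      rw [Finset.mem_erase] at hj
      refine Finset.mem_Icc.mpr ⟨?_, Finset.le_sup (Finset.mem_univ j)⟩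
      exact (hG.pos_dist_of_ne (fun h => hj.1 h.symm))
    rw [← Finset.sum_fiberwise_of_maps_to hmaps]
    have hstep : ∀ r ∈ Finset.Icc 1 N,
        ∑ j ∈ (Finset.univ.erase i).filter (fun j => G.dist i j = r), |W i j|
          ≤ c * K * (r : ℝ) ^ (-s) := by
      intro r hr
      have hr1 : 1 ≤ r := (Finset.mem_Icc.mp hr).1
      have hrpos : (0 : ℝ) < (r : ℝ) := by exact_mod_cast hr1
      have hbound : ∀ j ∈ (Finset.univ.erase i).filter (fun j => G.dist i j = r),
          |W i j| ≤ K * (r : ℝ) ^ (-η) := by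
        intro j hj
        rw [Finset.mem_filter, Finset.mem_erase] at hj
        have := hoff i j (fun h => hj.1.1 h.symm)
        rwa [hj.2] at this
      calc ∑ j ∈ (Finset.univ.erase i).filter (fun j => G.dist i j = r), |W i j|
          ≤ ∑ _j ∈ (Finset.univ.erase i).filter (fun j => G.dist i j = r),
              K * (r : ℝ) ^ (-η) := Finset.sum_le_sum hbound
        _ = ((Finset.univ.erase i).filter (fun j => G.dist i j = r)).card
              * (K * (r : ℝ) ^ (-η)) := by rw [Finset.sum_const, nsmul_eq_mul]
        _ ≤ ((Finset.univ.filter fun l : L => G.dist i l = r).card : ℝ)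
              * (K * (r : ℝ) ^ (-η)) := by
            apply mul_le_mul_of_nonneg_right
            · exact_mod_cast Finset.card_le_card
                (Finset.filter_subset_filter _ (Finset.erase_subset _ _))
            · positivity
        _ ≤ (c * (r : ℝ) ^ (d - 1)) * (K * (r : ℝ) ^ (-η)) := by
            apply mul_le_mul_of_nonneg_right (hsphere i r hr1) (by positivity)
        _ = c * K * ((r : ℝ) ^ (d - 1) * (r : ℝ) ^ (-η)) := by ring
        _ = c * K * (r : ℝ) ^ (-s) := by
            rw [← Real.rpow_add hrpos]
            congr 1
            rw [hs_def]; ring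
    calc ∑ r ∈ Finset.Icc 1 N,
          ∑ j ∈ (Finset.univ.erase i).filter (fun j => G.dist i j = r), |W i j|
        ≤ ∑ r ∈ Finset.Icc 1 N, c * K * (r : ℝ) ^ (-s) := Finset.sum_le_sum hstep
      _ = c * K * ∑ r ∈ Finset.Icc 1 N, (r : ℝ) ^ (-s) := by rw [Finset.mul_sum]
      _ ≤ c * K * Z := by
          apply mul_le_mul_of_nonneg_left (zeta_re_aux hs N) (by positivity)
  -- eigenvalue part
  obtain ⟨i₀, hi₀⟩ := Finite.exists_min hRsym.eigenvalues
  set μ : ℝ := hRsym.eigenvalues i₀ with hμ_def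
  have hμpos : 0 < μ := hR.eigenvalues_pos i₀
  have hinf : (⨅ i, hRsym.eigenvalues i) = μ :=
    le_antisymm (ciInf_le (Finite.bddBelow_range _) i₀) (le_ciInf hi₀)
  set v : L → ℝ := ⇑(hRsym.eigenvectorBasis i₀) with hv_def
  have hv : R *ᵥ v = μ • v := hRsym.mulVec_eigenvectorBasis i₀
  have hWv : W *ᵥ v = μ⁻¹ • v := by
    have h1 : μ • (W *ᵥ v) = v := by
      rw [← Matrix.mulVec_smul, ← hv, Matrix.mulVec_mulVec, hWinv, Matrix.one_mulVec]
    calc W *ᵥ v = μ⁻¹ • (μ • (W *ᵥ v)) := by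
          rw [smul_smul, inv_mul_cancel₀ (ne_of_gt hμpos), one_smul]
      _ = μ⁻¹ • v := by rw [h1]
  have hvne : v ≠ 0 := by
    have := (hRsym.eigenvectorBasis).orthonormal.ne_zero i₀
    intro h; apply this
    ext j; exact congrFun h j
  obtain ⟨i₁, hi₁⟩ := Finite.exists_max (fun j => |v j|)
  have hvi₁ : 0 < |v i₁| := by
    by_contra h
    push_neg at h
    apply hvne
    funext j
    have := hi₁ j
    have : |v j| ≤ 0 := le_trans this h
    simpa using (abs_nonneg (v j)).antisymm' this
  -- key inequality
  have hkey : μ⁻¹ ≤ B := by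
    have h1 : μ⁻¹ * |v i₁| = |(W *ᵥ v) i₁| := by
      rw [hWv]
      simp [abs_mul, abs_of_pos (inv_pos.mpr hμpos)]
    have h2 : |(W *ᵥ v) i₁| ≤ B * |v i₁| := by
      calc |(W *ᵥ v) i₁| = |∑ j, W i₁ j * v j| := by rfl
        _ ≤ ∑ j, |W i₁ j * v j| := Finset.abs_sum_le_sum_abs _ _
        _ = ∑ j, |W i₁ j| * |v j| := by simp [abs_mul]
        _ ≤ ∑ j, |W i₁ j| * |v i₁| :=
            Finset.sum_le_sum fun j _ =>
              mul_le_mul_of_nonneg_left (hi₁ j) (abs_nonneg _)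
        _ = (∑ j, |W i₁ j|) * |v i₁| := by rw [Finset.sum_mul]
        _ ≤ B * |v i₁| := mul_le_mul_of_nonneg_right (hrow i₁) (le_of_lt hvi₁)
    have := h1 ▸ h2
    exact le_of_mul_le_mul_right this hvi₁
  have hBpos : 0 < B := lt_of_lt_of_le (inv_pos.mpr hμpos) hkey
  have hmain : 1 / B ≤ μ := by
    rw [one_div]
    calc B⁻¹ ≤ (μ⁻¹)⁻¹ := by
          apply inv_anti₀ (inv_pos.mpr hμpos) hkey
      _ = μ := inv_inv μ
  have hBeq : K₀ + c * K * (riemannZeta (1 + η - d)).re = B := by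
    rw [hB_def, hZ_def, hzcast]
  rw [hBeq, hinf]
  refine ⟨hmain, by positivity, ?_⟩
  calc 2 / B = 2 * (1 / B) := by ring
    _ ≤ 2 * μ := by linarith
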